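/- If γ_h → γ in H (with all paths contained in U), then A(γ_h) converges to A(γ) in the strong operator topology, i.e. A(γ_h)ξ → A(γ)ξ in H_W for every ξ ∈ H_W. -/

import Mathlib

open MeasureTheory Set Filter Topology ContDiff
open scoped RealInnerProductSpace

noncomputable section

/-- Euclidean space `ℝ^n`. -/
abbrev E (n : ℕ) : Type := EuclideanSpace ℝ (Fin n)

/-- Lebesgue measure restricted to the interval `[0,1]`. -/
abbrev μ01 : Measure ℝ := volume.restrict (Set.Icc (0:ℝ) 1)

instance : IsFiniteMeasure μ01 :=
  ⟨by rw [Measure.restrict_apply_univ]; simp [Real.volume_Icc]⟩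

/-- The Hilbert space `H = ℝ^n × L²([0,1],ℝ^n)`, the standard model of `H¹([0,1],ℝ^n)`
via `u ↦ (u 0, u')`. -/
abbrev Hsp (n : ℕ) : Type := E n × Lp (E n) 2 μ01

variable {n : ℕ}

/-- The absolutely continuous path associated to `(x,w) ∈ H`:  `t ↦ x + ∫_0^t w(s) ds`. -/
def pathH (p : Hsp n) : ℝ → E n :=
  fun t => p.1 + ∫ s in Set.Ioc (0:ℝ) t, p.2 s ∂μ01

/-- The open set `𝒪 ⊆ H` of those `(x,w)` whose path stays in `U`. -/
def actO (U : Set (E n)) : Set (Hsp n) :=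
  {p | ∀ t ∈ Set.Icc (0:ℝ) 1, pathH p t ∈ U}

/-- The Lagrangian action functional `S_L`. -/
def action (L : ℝ → E n → E n → ℝ) (p : Hsp n) : ℝ :=
  ∫ t, L t (pathH p t) (p.2 t) ∂μ01

/-- The first differential of the action functional:
`DS_L(p)[ξ] = ∫_0^1 ( ∂L/∂q · ξ + ∂L/∂v · ξ' ) dt`. -/
def dAct (Lq Lv : ℝ → E n → E n → E n) (p ξ : Hsp n) : ℝ :=
  ∫ t, (⟪Lq t (pathH p t) (p.2 t), pathH ξ t⟫ + ⟪Lv t (pathH p t) (p.2 t), ξ.2 t⟫) ∂μ01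

/-- The second Gateaux differential of the action functional:
`d²S_L(p)[ξ,η] = ∫_0^1 ( ∂²L/∂v² ξ'·η' + ∂²L/∂v∂q ξ'·η + ∂²L/∂q∂v ξ·η' + ∂²L/∂q² ξ·η ) dt`. -/
def d2Act (Lvv Lqv Lqq : ℝ → E n → E n → (E n →L[ℝ] E n)) (p ξ η : Hsp n) : ℝ :=
  ∫ t, (⟪Lvv t (pathH p t) (p.2 t) (ξ.2 t), η.2 t⟫
      + ⟪Lqv t (pathH p t) (p.2 t) (pathH ξ t), η.2 t⟫
      + ⟪Lqv t (pathH p t) (p.2 t) (pathH η t), ξ.2 t⟫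
      + ⟪Lqq t (pathH p t) (p.2 t) (pathH ξ t), pathH η t⟫) ∂μ01

/-- The `H`-inner product `⟨(x,w),(y,z)⟩ = x·y + ⟨w,z⟩_{L²}`. -/
def innH (p q : Hsp n) : ℝ := ⟪p.1, q.1⟫ + ⟪p.2, q.2⟫

lemma pathH_add (p q : Hsp n) (t : ℝ) (_ht : t ∈ Set.Icc (0:ℝ) 1) :
    pathH (p + q) t = pathH p t + pathH q t := by
  have hint : ∀ r : Hsp n, Integrable (r.2 : ℝ → E n) (μ01.restrict (Set.Ioc (0:ℝ) t)) :=
    fun r => ((Lp.memLp r.2).integrable (by norm_num)).restrict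
  have h1 : (((p + q).2 : Lp (E n) 2 μ01) : ℝ → E n)
      =ᵐ[μ01.restrict (Set.Ioc (0:ℝ) t)] fun s => p.2 s + q.2 s :=
    ae_restrict_of_ae (Lp.coeFn_add p.2 q.2)
  have h2 : ∫ s in Set.Ioc (0:ℝ) t, (p + q).2 s ∂μ01
      = (∫ s in Set.Ioc (0:ℝ) t, p.2 s ∂μ01) + ∫ s in Set.Ioc (0:ℝ) t, q.2 s ∂μ01 := by
    rw [integral_congr_ae h1]
    exact integral_add (hint p) (hint q)
  simp only [pathH, Prod.fst_add, h2]
  abel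

lemma pathH_smul (c : ℝ) (p : Hsp n) (t : ℝ) (_ht : t ∈ Set.Icc (0:ℝ) 1) :
    pathH (c • p) t = c • pathH p t := by
  have h1 : (((c • p).2 : Lp (E n) 2 μ01) : ℝ → E n)
      =ᵐ[μ01.restrict (Set.Ioc (0:ℝ) t)] fun s => c • (p.2 s) :=
    ae_restrict_of_ae (Lp.coeFn_smul c p.2)
  have h2 : ∫ s in Set.Ioc (0:ℝ) t, (c • p).2 s ∂μ01
      = c • ∫ s in Set.Ioc (0:ℝ) t, p.2 s ∂μ01 := by
    rw [integral_congr_ae h1]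
    exact integral_smul c _
  simp only [pathH, Prod.smul_fst, h2, smul_add]

lemma pathH_zero (t : ℝ) (_ht : t ∈ Set.Icc (0:ℝ) 1) : pathH (0 : Hsp n) t = 0 := by
  have h1 : (((0 : Hsp n).2 : Lp (E n) 2 μ01) : ℝ → E n)
      =ᵐ[μ01.restrict (Set.Ioc (0:ℝ) t)] fun _ => (0 : E n) :=
    ae_restrict_of_ae (Lp.coeFn_zero (E n) 2 μ01)
  simp only [pathH]
  rw [integral_congr_ae h1]
  simp

/-- The closed subspace `H_W = {(x,w) : (γ(0),γ(1)) ∈ W}` of `H`. -/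
def HWsub (W : Submodule ℝ (E n × E n)) : Submodule ℝ (Hsp n) where
  carrier := {p | (pathH p 0, pathH p 1) ∈ W}
  add_mem' := by
    intro p q hp hq
    simp only [Set.mem_setOf_eq] at *
    rw [pathH_add p q 0 (by norm_num), pathH_add p q 1 (by norm_num)]
    exact W.add_mem hp hq
  zero_mem' := by
    simp only [Set.mem_setOf_eq]
    rw [pathH_zero 0 (by norm_num), pathH_zero 1 (by norm_num)]
    exact W.zero_mem
  smul_mem' := by
    intro c p hp
    simp only [Set.mem_setOf_eq] at *
    rw [pathH_smul c p 0 (by norm_num), pathH_smul c p 1 (by norm_num)]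
    exact W.smul_mem c hp

/-- The auxiliary inner product `⟨ξ,η⟩₀ = ∫ ∂²L/∂v²(t,0,0) ξ'·η' dt + ∫ ξ·η dt` on `H_W`. -/
def inn0 (Lvv : ℝ → E n → E n → (E n →L[ℝ] E n)) (ξ η : Hsp n) : ℝ :=
  (∫ t, ⟪Lvv t 0 0 (ξ.2 t), η.2 t⟫ ∂μ01) + ∫ t, ⟪pathH ξ t, pathH η t⟫ ∂μ01

end


noncomputable section
open MeasureTheory Set Filter Topology ContDiff
open scoped RealInnerProductSpace

noncomputable def ι (n : ℕ) : E n →L[ℝ] ℝ × E n × E n :=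
  (ContinuousLinearMap.inr ℝ ℝ (E n × E n)).comp (ContinuousLinearMap.inr ℝ (E n) (E n))

lemma ι_norm (n : ℕ) (u : E n) : ‖ι n u‖ = ‖u‖ := by simp [ι, Prod.norm_def]

lemma sq_le_aux {a C : ℝ} (ha : 0 ≤ a) (hC : 0 ≤ C) (h : a ^ 2 ≤ C * a) : a ≤ C := by
  rcases eq_or_lt_of_le ha with h0 | h0
  · linarith
  · nlinarith


lemma euclid_decomp {n : ℕ} (x : E n) : x = ∑ i, x i • EuclideanSpace.single i (1:ℝ) := by
  ext j
  have h : ∀ i, x i • EuclideanSpace.single i (1:ℝ) = EuclideanSpace.single i (x i) := by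
    intro i; ext k; rcases eq_or_ne i k with h|h <;> simp [EuclideanSpace.single_apply, h]
  simp only [h]
  rw [show (∑ i, EuclideanSpace.single i (x i)) j = ∑ i, (EuclideanSpace.single i (x i) : E n) j
    from by rw [WithLp.ofLp_sum, Finset.sum_apply]]
  rw [Finset.sum_eq_single j] <;> simp +contextual [EuclideanSpace.single_apply, eq_comm]

lemma abs_coord_le {n : ℕ} (x : E n) (i : Fin n) : |x i| ≤ ‖x‖ := by
  have h := abs_real_inner_le_norm x (EuclideanSpace.single i (1:ℝ))
  simpa [EuclideanSpace.inner_single_right, EuclideanSpace.norm_single] using h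

lemma norm_le_sum_abs {n : ℕ} (x : E n) : ‖x‖ ≤ ∑ i, |x i| := by
  calc ‖x‖ = ‖∑ i, x i • EuclideanSpace.single i (1:ℝ)‖ := by rw [← euclid_decomp]
    _ ≤ ∑ i, ‖x i • EuclideanSpace.single i (1:ℝ)‖ := norm_sum_le _ _
    _ = ∑ i, |x i| := by simp [norm_smul, EuclideanSpace.norm_single]

lemma opNorm_le_entries {n : ℕ} (B : E n →L[ℝ] E n) :
    ‖B‖ ≤ ∑ j, ∑ i, |(B (EuclideanSpace.single j (1:ℝ))) i| := by
  refine ContinuousLinearMap.opNorm_le_bound _ (by positivity) fun u => ?_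
  have h1 : B u = ∑ j, u j • B (EuclideanSpace.single j (1:ℝ)) := by
    conv_lhs => rw [euclid_decomp u]
    rw [map_sum]; simp
  calc ‖B u‖ ≤ ∑ j, ‖u j • B (EuclideanSpace.single j (1:ℝ))‖ := h1 ▸ norm_sum_le _ _
    _ = ∑ j, |u j| * ‖B (EuclideanSpace.single j (1:ℝ))‖ := by simp [norm_smul]
    _ ≤ ∑ j, (∑ i, |(B (EuclideanSpace.single j (1:ℝ))) i|) * ‖u‖ := by
        refine Finset.sum_le_sum fun j _ => ?_
        rw [mul_comm]
        exact mul_le_mul (norm_le_sum_abs _) (abs_coord_le _ _) (abs_nonneg _)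
          (by positivity)
    _ = (∑ j, ∑ i, |(B (EuclideanSpace.single j (1:ℝ))) i|) * ‖u‖ := by
        rw [Finset.sum_mul]

set_option maxHeartbeats 1000000 in
lemma Lvv_continuousOn {n : ℕ} (U : Set (E n)) (hU : IsOpen U)
    (L : ℝ → E n → E n → ℝ) (Lv : ℝ → E n → E n → E n)
    (Lvv : ℝ → E n → E n → (E n →L[ℝ] E n))
    (hL : ContDiffOn ℝ ∞ (fun z : ℝ × E n × E n => L z.1 z.2.1 z.2.2)
      (Set.univ ×ˢ U ×ˢ Set.univ))
    (hLv : ∀ (t : ℝ), ∀ q ∈ U, ∀ v : E n, HasGradientAt (fun v' => L t q v') (Lv t q v) v)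
    (hLvv : ∀ (t : ℝ), ∀ q ∈ U, ∀ v : E n, HasFDerivAt (fun v' => Lv t q v') (Lvv t q v) v) :
    ContinuousOn (fun z : ℝ × E n × E n => Lvv z.1 z.2.1 z.2.2)
      (Set.univ ×ˢ U ×ˢ Set.univ) := by
  set s : Set (ℝ × E n × E n) := Set.univ ×ˢ U ×ˢ Set.univ with hs_def
  have hs : IsOpen s := isOpen_univ.prod (hU.prod isOpen_univ)
  set F : ℝ × E n × E n → ℝ := fun z => L z.1 z.2.1 z.2.2 with hF_def
  set G : ℝ × E n × E n → (ℝ × E n × E n →L[ℝ] ℝ) := fun z => fderiv ℝ F z with hG_def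
  have hGsm : ContDiffOn ℝ ∞ G s := hL.fderiv_of_isOpen hs (by norm_num)
  set G2 : ℝ × E n × E n → (ℝ × E n × E n →L[ℝ] ℝ × E n × E n →L[ℝ] ℝ) :=
    fun z => fderiv ℝ G z with hG2_def
  have hG2c : ContinuousOn G2 s := hGsm.continuousOn_fderiv_of_isOpen hs (by norm_num)
  have hmem : ∀ (t : ℝ) (q : E n), q ∈ U → ∀ v : E n, ((t, q, v) : ℝ × E n × E n) ∈ s :=
    fun t q hq v => ⟨mem_univ _, hq, mem_univ _⟩
  have hincl : ∀ (t : ℝ) (q v : E n),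
      HasFDerivAt (fun v' : E n => ((t, q, v') : ℝ × E n × E n)) (ι n) v := by
    intro t q v
    have h : (fun v' : E n => ((t, q, v') : ℝ × E n × E n))
        = fun v' => ((t, q, 0) : ℝ × E n × E n) + ι n v' := by
      funext v'; simp [ι, Prod.ext_iff]
    rw [h]; exact (ι n).hasFDerivAt.const_add _
  -- step 1
  have step1 : ∀ (t : ℝ), ∀ q ∈ U, ∀ v u' : E n, G (t, q, v) (ι n u') = ⟪Lv t q v, u'⟫ := by
    intro t q hq v u'
    have hz := hmem t q hq v
    have hFd : DifferentiableAt ℝ F (t, q, v) :=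
      (hL.contDiffAt (hs.mem_nhds hz)).differentiableAt (by norm_num)
    have hchain : HasFDerivAt (fun v' => F (t, q, v'))
        ((fderiv ℝ F (t, q, v)).comp (ι n)) v :=
      HasFDerivAt.comp (g := F) v hFd.hasFDerivAt (hincl t q v)
    have hgrad : HasFDerivAt (fun v' => F (t, q, v'))
        ((InnerProductSpace.toDual ℝ (E n)) (Lv t q v)) v := (hLv t q hq v).hasFDerivAt
    have := hchain.unique hgrad
    calc G (t, q, v) (ι n u') = ((fderiv ℝ F (t, q, v)).comp (ι n)) u' := rfl
      _ = ((InnerProductSpace.toDual ℝ (E n)) (Lv t q v)) u' := by rw [this]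
      _ = ⟪Lv t q v, u'⟫ := by simp
  -- step 2
  have step2 : ∀ (t : ℝ), ∀ q ∈ U, ∀ v u u' : E n,
      G2 (t, q, v) (ι n u) (ι n u') = ⟪Lvv t q v u, u'⟫ := by
    intro t q hq v u u'
    have hz := hmem t q hq v
    have hGd : DifferentiableAt ℝ G (t, q, v) :=
      (hGsm.contDiffAt (hs.mem_nhds hz)).differentiableAt (by norm_num)
    have h1 : HasFDerivAt (fun v' => G (t, q, v'))
        ((fderiv ℝ G (t, q, v)).comp (ι n)) v := hGd.hasFDerivAt.comp v (hincl t q v)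
    have h2 : HasFDerivAt (fun v' => G (t, q, v') (ι n u'))
        ((ContinuousLinearMap.apply ℝ ℝ (ι n u')).comp
          ((fderiv ℝ G (t, q, v)).comp (ι n))) v :=
      (ContinuousLinearMap.apply ℝ ℝ (ι n u')).hasFDerivAt.comp v h1
    have h3 : (fun v' => G (t, q, v') (ι n u'))
        = fun v' => (innerSL ℝ u') (Lv t q v') := by
      funext v'
      rw [step1 t q hq v' u', innerSL_apply_apply]
      exact real_inner_comm _ _
    have h4 : HasFDerivAt (fun v' => (innerSL ℝ u') (Lv t q v'))
        ((innerSL ℝ u').comp (Lvv t q v)) v :=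
      (innerSL ℝ u').hasFDerivAt.comp v (hLvv t q hq v)
    rw [h3] at h2
    have h5 := h2.unique h4
    have := congrFun (congrArg DFunLike.coe h5) u
    simp only [ContinuousLinearMap.coe_comp', Function.comp_apply,
      ContinuousLinearMap.apply_apply, innerSL_apply_apply] at this
    rw [show (⟪Lvv t q v u, u'⟫ : ℝ) = ⟪u', Lvv t q v u⟫ from real_inner_comm _ _]
    exact this
  -- op norm bound
  have opbound : ∀ z ∈ s, ∀ z' ∈ s,
      ‖Lvv z.1 z.2.1 z.2.2 - Lvv z'.1 z'.2.1 z'.2.2‖ ≤ ‖G2 z - G2 z'‖ := by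
    rintro ⟨t, q, v⟩ hz ⟨t', q', v'⟩ hz'
    have hq : q ∈ U := hz.2.1
    have hq' : q' ∈ U := hz'.2.1
    refine ContinuousLinearMap.opNorm_le_bound _ (norm_nonneg (G2 (t, q, v) - G2 (t', q', v'))) fun u => ?_
    set d : E n := (Lvv t q v - Lvv t' q' v') u with hd
    have h6 : ‖d‖ ^ 2 = G2 (t, q, v) (ι n u) (ι n d) - G2 (t', q', v') (ι n u) (ι n d) := by
      rw [step2 t q hq v u d, step2 t' q' hq' v' u d, ← inner_sub_left]
      rw [show Lvv t q v u - Lvv t' q' v' u = d from by simp [hd]]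
      exact (real_inner_self_eq_norm_sq d).symm
    have h7 : ‖d‖ ^ 2 ≤ ‖G2 (t, q, v) - G2 (t', q', v')‖ * ‖u‖ * ‖d‖ := by
      rw [h6]
      have : G2 (t, q, v) (ι n u) (ι n d) - G2 (t', q', v') (ι n u) (ι n d)
          = ((G2 (t, q, v) - G2 (t', q', v')) (ι n u)) (ι n d) := by simp
      rw [this]
      calc ((G2 (t, q, v) - G2 (t', q', v')) (ι n u)) (ι n d)
          ≤ ‖((G2 (t, q, v) - G2 (t', q', v')) (ι n u)) (ι n d)‖ := le_abs_self _
        _ ≤ ‖(G2 (t, q, v) - G2 (t', q', v')) (ι n u)‖ * ‖ι n d‖ :=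
            ContinuousLinearMap.le_opNorm _ _
        _ ≤ ‖G2 (t, q, v) - G2 (t', q', v')‖ * ‖ι n u‖ * ‖ι n d‖ := by
            gcongr; exact ContinuousLinearMap.le_opNorm _ _
        _ = ‖G2 (t, q, v) - G2 (t', q', v')‖ * ‖u‖ * ‖d‖ := by rw [ι_norm, ι_norm]
    exact sq_le_aux (norm_nonneg _) (by positivity) h7
  -- matrix entries
  have hentry : ∀ z ∈ s, ∀ (i j : Fin n),
      (Lvv z.1 z.2.1 z.2.2 (EuclideanSpace.single j (1:ℝ))) i
        = G2 z (ι n (EuclideanSpace.single j (1:ℝ))) (ι n (EuclideanSpace.single i (1:ℝ))) := by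
    rintro ⟨t, q, v⟩ hz i j
    rw [step2 t q hz.2.1 v _ _]
    simp [EuclideanSpace.inner_single_right]
  -- entry functions are continuous
  have hΦ : ∀ a b : ℝ × E n × E n, ContinuousOn (fun z' => G2 z' a b) s := by
    intro a b
    exact (ContinuousLinearMap.apply ℝ ℝ b).continuous.comp_continuousOn
      ((ContinuousLinearMap.apply ℝ (ℝ × E n × E n →L[ℝ] ℝ) a).continuous.comp_continuousOn
        hG2c)
  -- conclude continuity
  intro z hz
  have hFz : Tendsto (fun z' => ∑ j, ∑ i,
      |G2 z' (ι n (EuclideanSpace.single j (1:ℝ))) (ι n (EuclideanSpace.single i (1:ℝ)))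
        - G2 z (ι n (EuclideanSpace.single j (1:ℝ))) (ι n (EuclideanSpace.single i (1:ℝ)))|)
      (𝓝[s] z) (𝓝 0) := by
    have h0 : (0:ℝ) = ∑ j : Fin n, ∑ i : Fin n, (0:ℝ) := by simp
    rw [h0]
    refine tendsto_finset_sum _ fun j _ => tendsto_finset_sum _ fun i _ => ?_
    have h1 := ((hΦ (ι n (EuclideanSpace.single j (1:ℝ)))
      (ι n (EuclideanSpace.single i (1:ℝ))) z hz).tendsto.sub
        (tendsto_const_nhds (x := G2 z (ι n (EuclideanSpace.single j (1:ℝ)))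
          (ι n (EuclideanSpace.single i (1:ℝ)))))).abs
    simpa using h1
  have hev : ∀ᶠ z' in 𝓝[s] z,
      ‖Lvv z'.1 z'.2.1 z'.2.2 - Lvv z.1 z.2.1 z.2.2‖ ≤ ∑ j, ∑ i,
      |G2 z' (ι n (EuclideanSpace.single j (1:ℝ))) (ι n (EuclideanSpace.single i (1:ℝ)))
        - G2 z (ι n (EuclideanSpace.single j (1:ℝ))) (ι n (EuclideanSpace.single i (1:ℝ)))| := by
    filter_upwards [self_mem_nhdsWithin] with z' hz'
    refine (opNorm_le_entries _).trans (le_of_eq ?_)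
    refine Finset.sum_congr rfl fun j _ => Finset.sum_congr rfl fun i _ => ?_
    congr 1
    rw [ContinuousLinearMap.sub_apply]
    rw [show ((Lvv z'.1 z'.2.1 z'.2.2 (EuclideanSpace.single j (1:ℝ))
        - Lvv z.1 z.2.1 z.2.2 (EuclideanSpace.single j (1:ℝ))) : E n) i
      = (Lvv z'.1 z'.2.1 z'.2.2 (EuclideanSpace.single j (1:ℝ))) i
        - (Lvv z.1 z.2.1 z.2.2 (EuclideanSpace.single j (1:ℝ))) i from rfl]
    rw [hentry z' hz' i j, hentry z hz i j]
  have hfin : Tendsto (fun z' : ℝ × E n × E n => Lvv z'.1 z'.2.1 z'.2.2) (𝓝[s] z)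
      (𝓝 (Lvv z.1 z.2.1 z.2.2)) :=
    tendsto_iff_norm_sub_tendsto_zero.mpr
      (squeeze_zero' (Eventually.of_forall fun _ => norm_nonneg _) hev hFz)
  exact hfin

end
noncomputable section
open MeasureTheory Set Filter Topology ContDiff
open scoped RealInnerProductSpace

variable {n : ℕ}

instance : IsProbabilityMeasure (μ01) :=
  ⟨by rw [Measure.restrict_apply_univ]; simp [Real.volume_Icc]⟩

lemma lp_coe_integrable (w : Lp (E n) 2 μ01) : Integrable (w : ℝ → E n) μ01 :=
  (Lp.memLp w).integrable (by norm_num)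

/-- `∫ ‖f‖ ≤ ‖f‖_{L²}` on the probability space `[0,1]`. -/
lemma integral_norm_le_L2 (f : Lp (E n) 2 μ01) : ∫ t, ‖f t‖ ∂μ01 ≤ ‖f‖ := by
  have h1 : eLpNorm (f : ℝ → E n) 1 μ01 ≤ eLpNorm (f : ℝ → E n) 2 μ01 :=
    eLpNorm_le_eLpNorm_of_exponent_le (by norm_num) (Lp.aestronglyMeasurable f)
  have h2 : ∫ t, ‖f t‖ ∂μ01 = (eLpNorm (f : ℝ → E n) 1 μ01).toReal := by
    rw [eLpNorm_one_eq_lintegral_enorm]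
    exact integral_norm_eq_lintegral_enorm (Lp.aestronglyMeasurable f)
  rw [h2, Lp.norm_def]
  exact ENNReal.toReal_mono (Lp.eLpNorm_ne_top f) h1

lemma integral_normsq_eq (f : Lp (E n) 2 μ01) : ∫ t, ‖f t‖ ^ 2 ∂μ01 = ‖f‖ ^ 2 := by
  have h1 : ⟪f, f⟫ = ∫ t, ⟪f t, f t⟫ ∂μ01 := MeasureTheory.L2.inner_def f f
  have h2 : ∫ t, ⟪f t, f t⟫ ∂μ01 = ∫ t, ‖f t‖ ^ 2 ∂μ01 := by
    refine integral_congr_ae (Eventually.of_forall fun t => ?_)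
    exact real_inner_self_eq_norm_sq _
  rw [← h2, ← h1, real_inner_self_eq_norm_sq]

lemma integrable_normsq (f : Lp (E n) 2 μ01) : Integrable (fun t => ‖f t‖ ^ 2) μ01 := by
  have := MeasureTheory.L2.integrable_inner (𝕜 := ℝ) f f
  refine this.congr (Eventually.of_forall fun t => ?_)
  exact real_inner_self_eq_norm_sq _

lemma pathH_continuous (p : Hsp n) : Continuous (pathH p) := by
  have key : Continuous fun t => ∫ s in Set.Ioc (0:ℝ) t, p.2 s ∂μ01 := by
    rw [continuous_iff_continuousAt]
    intro t₀
    have h0 : ∀ t : ℝ, ∫ s in Set.Ioc (0:ℝ) t, p.2 s ∂μ01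
        = ∫ s, (Set.Ioc (0:ℝ) t).indicator (p.2 : ℝ → E n) s ∂μ01 := by
      intro t; rw [integral_indicator measurableSet_Ioc]
    simp only [h0]
    refine continuousAt_of_dominated (bound := fun s => ‖p.2 s‖) ?_ ?_ ?_ ?_
    · exact Eventually.of_forall fun t =>
        (Lp.aestronglyMeasurable p.2).indicator measurableSet_Ioc
    · exact Eventually.of_forall fun t => Eventually.of_forall fun s =>
        norm_indicator_le_norm_self _ _
    · exact (lp_coe_integrable p.2).norm
    · have hsing : (μ01 : Measure ℝ) {t₀} = 0 := by
        rw [Measure.restrict_apply' measurableSet_Icc]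
        exact le_antisymm (le_trans (measure_mono Set.inter_subset_left)
          (le_of_eq Real.volume_singleton)) zero_le
      filter_upwards [measure_eq_zero_iff_ae_notMem.mp hsing] with a ha
      rcases lt_or_ge (0:ℝ) a with h0a | h0a
      · -- a > 0 : indicator = if a ≤ t then p.2 a else 0, locally constant near t₀ ≠ a
        have hne : a ≠ t₀ := fun h => ha (by simp [h])
        rcases lt_or_lt_iff_ne.mpr hne with hlt | hlt
        · -- a < t₀: for t near t₀, a ∈ Ioc 0 t
          have hev : ∀ᶠ t in 𝓝 t₀, (Set.Ioc (0:ℝ) t).indicator (p.2 : ℝ → E n) a = p.2 a := by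
            filter_upwards [eventually_gt_nhds hlt] with t ht
            exact Set.indicator_of_mem (Set.mem_Ioc.mpr ⟨h0a, ht.le⟩) _
          have htd : Tendsto (fun t : ℝ => (Set.Ioc (0:ℝ) t).indicator (p.2 : ℝ → E n) a)
              (𝓝 t₀) (𝓝 ((Set.Ioc (0:ℝ) t₀).indicator (p.2 : ℝ → E n) a)) := by
            rw [Set.indicator_of_mem (Set.mem_Ioc.mpr ⟨h0a, hlt.le⟩)]
            exact Tendsto.congr' (hev.mono fun t h => h.symm) tendsto_const_nhds
          exact htd
        · have hev : ∀ᶠ t in 𝓝 t₀, (Set.Ioc (0:ℝ) t).indicator (p.2 : ℝ → E n) a = 0 := by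
            filter_upwards [eventually_lt_nhds hlt] with t ht
            exact Set.indicator_of_notMem
              (fun hmem => absurd (Set.mem_Ioc.mp hmem).2 (not_le.mpr ht)) _
          have htd : Tendsto (fun t : ℝ => (Set.Ioc (0:ℝ) t).indicator (p.2 : ℝ → E n) a)
              (𝓝 t₀) (𝓝 ((Set.Ioc (0:ℝ) t₀).indicator (p.2 : ℝ → E n) a)) := by
            rw [Set.indicator_of_notMem
              (fun hmem => absurd (Set.mem_Ioc.mp hmem).2 (not_le.mpr hlt))]
            exact Tendsto.congr' (hev.mono fun t h => h.symm) tendsto_const_nhds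
          exact htd
      · -- a ≤ 0 : always not in Ioc 0 t
        have hind : ∀ t : ℝ, (Set.Ioc (0:ℝ) t).indicator (p.2 : ℝ → E n) a = 0 := fun t =>
          Set.indicator_of_notMem (fun hmem => absurd hmem.1 (not_lt.mpr h0a)) _
        simp only [hind]
        exact tendsto_const_nhds
  exact continuous_const.add key

lemma pathH_sub (p q : Hsp n) (t : ℝ) (ht : t ∈ Set.Icc (0:ℝ) 1) :
    pathH (p - q) t = pathH p t - pathH q t := by
  have h : p - q = p + (-1 : ℝ) • q := by module
  rw [h, pathH_add p ((-1:ℝ) • q) t ht, pathH_smul (-1) q t ht]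
  simp [sub_eq_add_neg]

/-- `‖pathH p t‖ ≤ ‖p.1‖ + ‖p.2‖` for `t ∈ [0,1]`. -/
lemma pathH_norm_le (p : Hsp n) (t : ℝ) (_ht : t ∈ Set.Icc (0:ℝ) 1) :
    ‖pathH p t‖ ≤ ‖p.1‖ + ‖p.2‖ := by
  refine (norm_add_le _ _).trans (add_le_add le_rfl ?_)
  calc ‖∫ s in Set.Ioc (0:ℝ) t, p.2 s ∂μ01‖ ≤ ∫ s in Set.Ioc (0:ℝ) t, ‖p.2 s‖ ∂μ01 :=
        norm_integral_le_integral_norm _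
    _ ≤ ∫ s, ‖p.2 s‖ ∂μ01 :=
        setIntegral_le_integral (lp_coe_integrable p.2).norm
          (Eventually.of_forall fun s => norm_nonneg _)
    _ ≤ ‖p.2‖ := integral_norm_le_L2 p.2

/-- `‖p.1‖ ≤ ‖pathH p t‖ + ‖p.2‖` for `t ∈ [0,1]`. -/
lemma fst_norm_le (p : Hsp n) (t : ℝ) (ht : t ∈ Set.Icc (0:ℝ) 1) :
    ‖p.1‖ ≤ ‖pathH p t‖ + ‖p.2‖ := by
  have h : p.1 = pathH p t - ∫ s in Set.Ioc (0:ℝ) t, p.2 s ∂μ01 := by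
    simp [pathH]
  rw [h]
  refine (norm_sub_le _ _).trans (add_le_add le_rfl ?_)
  calc ‖∫ s in Set.Ioc (0:ℝ) t, p.2 s ∂μ01‖ ≤ ∫ s in Set.Ioc (0:ℝ) t, ‖p.2 s‖ ∂μ01 :=
        norm_integral_le_integral_norm _
    _ ≤ ∫ s, ‖p.2 s‖ ∂μ01 :=
        setIntegral_le_integral (lp_coe_integrable p.2).norm
          (Eventually.of_forall fun s => norm_nonneg _)
    _ ≤ ‖p.2‖ := integral_norm_le_L2 p.2

/-- Composition of a `ContinuousOn` map with an a.e.-measurable map landing a.e. in the set. -/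
lemma aesm_comp_continuousOn {β γ : Type*} [TopologicalSpace β] [MeasurableSpace β]
    [BorelSpace β] [TopologicalSpace γ] [TopologicalSpace.PseudoMetrizableSpace γ]
    [SecondCountableTopology β] {α : Type*} [MeasurableSpace α]
    {μ : Measure α} {g : β → γ} {S : Set β} {f : α → β}
    (hg : ContinuousOn g S) (hS : MeasurableSet S) (hf : AEMeasurable f μ)
    (hmem : ∀ᵐ x ∂μ, f x ∈ S) : AEStronglyMeasurable (fun x => g (f x)) μ := by
  have h1 : ∀ᵐ y ∂(μ.map f), y ∈ S := (ae_map_iff hf hS).mpr hmem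
  have h2 : (μ.map f).restrict S = μ.map f := Measure.restrict_eq_self_of_ae_mem h1
  have h3 : AEStronglyMeasurable g (μ.map f) := by
    rw [← h2]; exact hg.aestronglyMeasurable hS
  exact h3.comp_aemeasurable hf

end

noncomputable section
open MeasureTheory Set Filter Topology
open scoped RealInnerProductSpace

lemma integrable_mul_sq {α : Type*} [MeasurableSpace α] {μ : Measure α} {u v : α → ℝ}
    (hu : AEStronglyMeasurable u μ) (hv : AEStronglyMeasurable v μ)
    (hu2 : Integrable (fun t => u t ^ 2) μ) (hv2 : Integrable (fun t => v t ^ 2) μ) :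
    Integrable (fun t => u t * v t) μ := by
  refine Integrable.mono' ((hu2.add hv2).const_mul (1/2)) (hu.mul hv)
    (Eventually.of_forall fun t => ?_)
  simp only [Pi.add_apply]
  rw [Real.norm_eq_abs, abs_le]
  constructor <;> nlinarith [sq_nonneg (u t - v t), sq_nonneg (u t + v t)]

lemma integrable_norm_mul {n : ℕ} (f g : Lp (E n) 2 μ01) :
    Integrable (fun t => ‖f t‖ * ‖g t‖) μ01 :=
  integrable_mul_sq (Lp.aestronglyMeasurable f).norm (Lp.aestronglyMeasurable g).norm
    (integrable_normsq f) (integrable_normsq g)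
end

set_option maxHeartbeats 2000000 in
/-- If `γ_h → γ` in `H` (paths in `U`), then `A(γ_h) → A(γ)` in the strong
operator topology on `H_W`. -/
theorem A_strong_convergence
    {n : ℕ} (U : Set (E n)) (hU : IsOpen U)
    (L : ℝ → E n → E n → ℝ)
    (Lq Lv : ℝ → E n → E n → E n)
    (Lvv Lqv Lvq Lqq : ℝ → E n → E n → (E n →L[ℝ] E n))
    (hL : ContDiffOn ℝ ∞ (fun z : ℝ × E n × E n => L z.1 z.2.1 z.2.2)
      (Set.univ ×ˢ U ×ˢ Set.univ))
    (hLq : ∀ (t : ℝ), ∀ q ∈ U, ∀ v : E n, HasGradientAt (fun q' => L t q' v) (Lq t q v) q)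
    (hLv : ∀ (t : ℝ), ∀ q ∈ U, ∀ v : E n, HasGradientAt (fun v' => L t q v') (Lv t q v) v)
    (hLvv : ∀ (t : ℝ), ∀ q ∈ U, ∀ v : E n, HasFDerivAt (fun v' => Lv t q v') (Lvv t q v) v)
    (hLqv : ∀ (t : ℝ), ∀ q ∈ U, ∀ v : E n, HasFDerivAt (fun q' => Lv t q' v) (Lqv t q v) q)
    (hLvq : ∀ (t : ℝ), ∀ q ∈ U, ∀ v : E n, HasFDerivAt (fun v' => Lq t q v') (Lvq t q v) v)
    (hLqq : ∀ (t : ℝ), ∀ q ∈ U, ∀ v : E n, HasFDerivAt (fun q' => Lq t q' v) (Lqq t q v) q)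
    (ℓ₁ : ℝ) (hℓ₁ : 0 < ℓ₁)
    (hL1 : ∀ t ∈ Set.Icc (0:ℝ) 1, ∀ q ∈ U, ∀ v : E n,
      ‖Lvv t q v‖ ≤ ℓ₁ ∧ ‖Lqv t q v‖ ≤ ℓ₁ * (1 + ‖v‖) ∧ ‖Lvq t q v‖ ≤ ℓ₁ * (1 + ‖v‖)
        ∧ ‖Lqq t q v‖ ≤ ℓ₁ * (1 + ‖v‖ ^ 2))
    (ℓ₂ : ℝ) (hℓ₂ : 0 < ℓ₂)
    (hL2 : ∀ t ∈ Set.Icc (0:ℝ) 1, ∀ q ∈ U, ∀ v ξ : E n, ℓ₂ * ‖ξ‖ ^ 2 ≤ ⟪Lvv t q v ξ, ξ⟫)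
    (W : Submodule ℝ (E n × E n)) (h0U : (0 : E n) ∈ U)
    (A : Hsp n → (↥(HWsub W) →L[ℝ] ↥(HWsub W)))
    (hA : ∀ γ ∈ actO U, ∀ ξ η : ↥(HWsub W),
      inn0 Lvv (A γ ξ : Hsp n) (η : Hsp n)
        = (∫ t, ⟪Lvv t (pathH γ t) (γ.2 t) ((ξ : Hsp n).2 t), (η : Hsp n).2 t⟫ ∂μ01)
          + ∫ t, ⟪pathH (ξ : Hsp n) t, pathH (η : Hsp n) t⟫ ∂μ01)
    (γs : ℕ → Hsp n) (γ : Hsp n)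
    (hγs : ∀ h, γs h ∈ actO U) (hγ : γ ∈ actO U)
    (hconv : Tendsto γs atTop (𝓝 γ)) :
    ∀ ξ : ↥(HWsub W), Tendsto (fun h => A (γs h) ξ) atTop (𝓝 (A γ ξ)) := by
  intro ξ
  classical
  have hTcont : ContinuousOn (fun z : ℝ × E n × E n => Lvv z.1 z.2.1 z.2.2)
      (Set.univ ×ˢ U ×ˢ Set.univ) := Lvv_continuousOn U hU L Lv Lvv hL hLv hLvv
  set s : Set (ℝ × E n × E n) := Set.univ ×ˢ U ×ˢ Set.univ with hs_def
  have hs_open : IsOpen s := isOpen_univ.prod (hU.prod isOpen_univ)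
  -- basic measurability of the composed coefficient map
  have hz_aem : ∀ p : Hsp n,
      AEMeasurable (fun t => ((t, pathH p t, (p.2 : ℝ → E n) t) : ℝ × E n × E n)) μ01 :=
    fun p => aemeasurable_id.prodMk
      (((pathH_continuous p).measurable.aemeasurable).prodMk
        (Lp.aestronglyMeasurable p.2).aemeasurable)
  have hz_mem : ∀ p ∈ actO U,
      ∀ᵐ t ∂μ01, ((t, pathH p t, (p.2 : ℝ → E n) t) : ℝ × E n × E n) ∈ s := by
    intro p hp
    filter_upwards [ae_restrict_mem measurableSet_Icc] with t ht
    exact ⟨mem_univ _, hp t ht, mem_univ _⟩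
  have hf_meas : ∀ p ∈ actO U,
      AEStronglyMeasurable (fun t => Lvv t (pathH p t) (p.2 t)) μ01 := fun p hp =>
    aesm_comp_continuousOn hTcont hs_open.measurableSet (hz_aem p) (hz_mem p hp)
  have hf_bd : ∀ p ∈ actO U, ∀ᵐ t ∂μ01, ‖Lvv t (pathH p t) (p.2 t)‖ ≤ ℓ₁ := by
    intro p hp
    filter_upwards [ae_restrict_mem measurableSet_Icc] with t ht
    exact (hL1 t ht _ (hp t ht) _).1
  -- integrability of the main bilinear integrands
  have happly : ∀ p ∈ actO U, ∀ w : Lp (E n) 2 μ01,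
      AEStronglyMeasurable (fun t => Lvv t (pathH p t) (p.2 t) (w t)) μ01 := by
    intro p hp w
    exact isBoundedBilinearMap_apply.continuous.comp_aestronglyMeasurable
      ((hf_meas p hp).prodMk (Lp.aestronglyMeasurable w))
  have hint1 : ∀ p ∈ actO U, ∀ w w' : Lp (E n) 2 μ01,
      Integrable (fun t => ⟪Lvv t (pathH p t) (p.2 t) (w t), w' t⟫) μ01 := by
    intro p hp w w'
    refine Integrable.mono' ((integrable_norm_mul w w').const_mul ℓ₁)
      ((happly p hp w).inner (Lp.aestronglyMeasurable w')) ?_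
    filter_upwards [hf_bd p hp] with t hbd
    calc ‖⟪Lvv t (pathH p t) (p.2 t) (w t), w' t⟫‖
        ≤ ‖Lvv t (pathH p t) (p.2 t) (w t)‖ * ‖w' t‖ := norm_inner_le_norm _ _
      _ ≤ (ℓ₁ * ‖w t‖) * ‖w' t‖ := by
          refine mul_le_mul_of_nonneg_right ?_ (norm_nonneg _)
          exact (ContinuousLinearMap.le_opNorm _ _).trans
            (mul_le_mul_of_nonneg_right hbd (norm_nonneg _))
      _ = ℓ₁ * (‖w t‖ * ‖w' t‖) := by ring
  have hint2 : ∀ p q : Hsp n, Integrable (fun t => ⟪pathH p t, pathH q t⟫) μ01 := by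
    intro p q
    exact ((pathH_continuous p).inner (pathH_continuous q)).integrableOn_Icc
  -- the zero path is admissible
  have h0act : (0 : Hsp n) ∈ actO U := by
    intro t ht; rw [pathH_zero t ht]; exact h0U
  have hint0 : ∀ w w' : Lp (E n) 2 μ01,
      Integrable (fun t => ⟪Lvv t 0 0 (w t), w' t⟫) μ01 := by
    intro w w'
    refine (hint1 0 h0act w w').congr ?_
    filter_upwards [ae_restrict_mem measurableSet_Icc,
      Lp.coeFn_zero (E n) 2 μ01] with t ht h2
    have h1 : pathH (0 : Hsp n) t = 0 := pathH_zero t ht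
    have h2' : ((0 : Hsp n).2 : ℝ → E n) t = 0 := h2
    rw [h1, h2']
  -- linearity of inn0 in the first variable, for differences
  have hinn0_sub : ∀ p q r : Hsp n,
      inn0 Lvv (p - q) r = inn0 Lvv p r - inn0 Lvv q r := by
    intro p q r
    have hterm1 : (∫ t, ⟪Lvv t 0 0 ((p - q).2 t), r.2 t⟫ ∂μ01)
        = (∫ t, ⟪Lvv t 0 0 (p.2 t), r.2 t⟫ ∂μ01)
          - ∫ t, ⟪Lvv t 0 0 (q.2 t), r.2 t⟫ ∂μ01 := by
      have hae : (fun t => ⟪Lvv t 0 0 ((p - q).2 t), r.2 t⟫)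
          =ᵐ[μ01] fun t => ⟪Lvv t 0 0 (p.2 t), r.2 t⟫ - ⟪Lvv t 0 0 (q.2 t), r.2 t⟫ := by
        filter_upwards [Lp.coeFn_sub p.2 q.2] with t ht
        have : ((p - q).2 : ℝ → E n) t = p.2 t - q.2 t := ht
        rw [this, map_sub, inner_sub_left]
      rw [integral_congr_ae hae, integral_sub (hint0 p.2 r.2) (hint0 q.2 r.2)]
    have hterm2 : (∫ t, ⟪pathH (p - q) t, pathH r t⟫ ∂μ01)
        = (∫ t, ⟪pathH p t, pathH r t⟫ ∂μ01) - ∫ t, ⟪pathH q t, pathH r t⟫ ∂μ01 := by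
      have hae : (fun t => ⟪pathH (p - q) t, pathH r t⟫)
          =ᵐ[μ01] fun t => ⟪pathH p t, pathH r t⟫ - ⟪pathH q t, pathH r t⟫ := by
        filter_upwards [ae_restrict_mem measurableSet_Icc] with t ht
        rw [pathH_sub p q t ht, inner_sub_left]
      rw [integral_congr_ae hae, integral_sub (hint2 p r) (hint2 q r)]
    unfold inn0
    rw [hterm1, hterm2]; ring
  -- MAIN KEY STEP
  have key : ∀ σ : ℕ → Hsp n, (∀ k, σ k ∈ actO U) → Tendsto σ atTop (𝓝 γ) →
      (∀ᵐ t ∂μ01, Tendsto (fun k => ((σ k).2 : ℝ → E n) t) atTop (𝓝 ((γ.2 : ℝ → E n) t))) →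
      Tendsto (fun k => A (σ k) ξ) atTop (𝓝 (A γ ξ)) := by
    intro σ hσU hσ hσae
    set g : ℕ → ℝ → E n := fun k t =>
      Lvv t (pathH (σ k) t) ((σ k).2 t) ((ξ : Hsp n).2 t)
        - Lvv t (pathH γ t) (γ.2 t) ((ξ : Hsp n).2 t) with hg_def
    set ε : ℕ → ℝ := fun k => Real.sqrt (∫ t, ‖g k t‖ ^ 2 ∂μ01) with hε_def
    have hgm : ∀ k, AEStronglyMeasurable (g k) μ01 := fun k =>
      (happly (σ k) (hσU k) ((ξ : Hsp n).2)).sub (happly γ hγ ((ξ : Hsp n).2))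
    have hgm2 : ∀ k, AEStronglyMeasurable (fun t => ‖g k t‖ ^ 2) μ01 := fun k =>
      (continuous_pow 2).comp_aestronglyMeasurable (hgm k).norm
    have hgbd : ∀ k, ∀ᵐ t ∂μ01, ‖g k t‖ ≤ 2 * ℓ₁ * ‖((ξ : Hsp n).2 : ℝ → E n) t‖ := by
      intro k
      filter_upwards [hf_bd (σ k) (hσU k), hf_bd γ hγ] with t h1 h2
      calc ‖g k t‖ ≤ ‖Lvv t (pathH (σ k) t) ((σ k).2 t) ((ξ : Hsp n).2 t)‖
            + ‖Lvv t (pathH γ t) (γ.2 t) ((ξ : Hsp n).2 t)‖ := norm_sub_le _ _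
        _ ≤ ℓ₁ * ‖((ξ : Hsp n).2 : ℝ → E n) t‖ + ℓ₁ * ‖((ξ : Hsp n).2 : ℝ → E n) t‖ := by
            gcongr
            · exact (ContinuousLinearMap.le_opNorm _ _).trans
                (mul_le_mul_of_nonneg_right h1 (norm_nonneg _))
            · exact (ContinuousLinearMap.le_opNorm _ _).trans
                (mul_le_mul_of_nonneg_right h2 (norm_nonneg _))
        _ = 2 * ℓ₁ * ‖((ξ : Hsp n).2 : ℝ → E n) t‖ := by ring
    have hgsq_int : ∀ k, Integrable (fun t => ‖g k t‖ ^ 2) μ01 := by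
      intro k
      have hb : Integrable (fun t => (2 * ℓ₁ * ‖((ξ : Hsp n).2 : ℝ → E n) t‖) ^ 2) μ01 :=
        ((Lp.memLp ((ξ : Hsp n).2)).norm.const_mul (2 * ℓ₁)).integrable_sq
      refine Integrable.mono' hb (hgm2 k) ?_
      filter_upwards [hgbd k] with t hbd
      rw [Real.norm_of_nonneg (by positivity)]
      have h0 : (0:ℝ) ≤ ‖g k t‖ := norm_nonneg _
      nlinarith
    -- pointwise convergence of the path
    have hnorm0 : Tendsto (fun k => ‖σ k - γ‖) atTop (𝓝 0) :=
      tendsto_iff_norm_sub_tendsto_zero.mp hσ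
    have hpath : ∀ t ∈ Set.Icc (0:ℝ) 1,
        Tendsto (fun k => pathH (σ k) t) atTop (𝓝 (pathH γ t)) := by
      intro t ht
      rw [tendsto_iff_norm_sub_tendsto_zero]
      refine squeeze_zero (fun k => norm_nonneg _) (fun k => ?_) (by simpa using hnorm0.const_mul 2)
      calc ‖pathH (σ k) t - pathH γ t‖ = ‖pathH (σ k - γ) t‖ := by rw [pathH_sub _ _ t ht]
        _ ≤ ‖(σ k - γ).1‖ + ‖(σ k - γ).2‖ := pathH_norm_le _ t ht
        _ ≤ ‖σ k - γ‖ + ‖σ k - γ‖ := add_le_add (norm_fst_le _) (norm_snd_le _)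
        _ = 2 * ‖σ k - γ‖ := by ring
    -- a.e. convergence of ‖g k t‖²
    have hgae : ∀ᵐ t ∂μ01, Tendsto (fun k => ‖g k t‖ ^ 2) atTop (𝓝 0) := by
      filter_upwards [hσae, ae_restrict_mem measurableSet_Icc] with t hvt ht
      have hzmem : ((t, pathH γ t, (γ.2 : ℝ → E n) t) : ℝ × E n × E n) ∈ s :=
        ⟨mem_univ _, hγ t ht, mem_univ _⟩
      have hCA : ContinuousAt (fun z : ℝ × E n × E n => Lvv z.1 z.2.1 z.2.2)
          (t, pathH γ t, γ.2 t) := hTcont.continuousAt (hs_open.mem_nhds hzmem)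
      have hzk : Tendsto (fun k => ((t, pathH (σ k) t, ((σ k).2 : ℝ → E n) t) : ℝ × E n × E n))
          atTop (𝓝 (t, pathH γ t, γ.2 t)) :=
        tendsto_const_nhds.prodMk_nhds ((hpath t ht).prodMk_nhds hvt)
      have hop : Tendsto (fun k => Lvv t (pathH (σ k) t) ((σ k).2 t)) atTop
          (𝓝 (Lvv t (pathH γ t) (γ.2 t))) := hCA.tendsto.comp hzk
      have happ : Tendsto (fun k => Lvv t (pathH (σ k) t) ((σ k).2 t) ((ξ : Hsp n).2 t))
          atTop (𝓝 (Lvv t (pathH γ t) (γ.2 t) ((ξ : Hsp n).2 t))) :=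
        ((ContinuousLinearMap.apply ℝ (E n) ((ξ : Hsp n).2 t)).continuous.tendsto _).comp hop
      have hg0 : Tendsto (fun k => g k t) atTop (𝓝 0) := by
        have := happ.sub (tendsto_const_nhds
          (x := Lvv t (pathH γ t) (γ.2 t) ((ξ : Hsp n).2 t)))
        simpa [hg_def] using this
      have := (hg0.norm.pow 2)
      simpa using this
    -- ε k → 0
    have hεto : Tendsto ε atTop (𝓝 0) := by
      have hdom : Tendsto (fun k => ∫ t, ‖g k t‖ ^ 2 ∂μ01) atTop (𝓝 (∫ (_ : ℝ), (0:ℝ) ∂μ01)) := by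
        refine tendsto_integral_of_dominated_convergence
          (fun t => (2 * ℓ₁ * ‖((ξ : Hsp n).2 : ℝ → E n) t‖) ^ 2) (fun k => hgm2 k)
          (((Lp.memLp ((ξ : Hsp n).2)).norm.const_mul (2 * ℓ₁)).integrable_sq) (fun k => ?_) hgae
        filter_upwards [hgbd k] with t hbd
        rw [Real.norm_of_nonneg (by positivity)]
        have h0 : (0:ℝ) ≤ ‖g k t‖ := norm_nonneg _
        nlinarith
      rw [integral_zero] at hdom
      have hs : Tendsto (fun k => Real.sqrt (∫ t, ‖g k t‖ ^ 2 ∂μ01)) atTop (𝓝 (Real.sqrt 0)) :=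
        (Real.continuous_sqrt.tendsto 0).comp hdom
      simpa [Real.sqrt_zero, hε_def] using hs
    -- per-k estimate
    have hest : ∀ k, ‖(A (σ k) ξ : Hsp n) - (A γ ξ : Hsp n)‖ ≤ (2 + 3 / ℓ₂) * ε k := by
      intro k
      set η : ↥(HWsub W) := A (σ k) ξ - A γ ξ with hη_def
      have hηc : (η : Hsp n) = (A (σ k) ξ : Hsp n) - (A γ ξ : Hsp n) := rfl
      set ww : Lp (E n) 2 μ01 := (η : Hsp n).2 with hww_def
      -- inn0 identity
      have e1 := hA (σ k) (hσU k) ξ η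
      have e2 := hA γ hγ ξ η
      have hsub : inn0 Lvv (η : Hsp n) (η : Hsp n)
          = ∫ t, ⟪g k t, ww t⟫ ∂μ01 := by
        have h1 : inn0 Lvv (η : Hsp n) (η : Hsp n)
            = inn0 Lvv (A (σ k) ξ : Hsp n) (η : Hsp n)
              - inn0 Lvv (A γ ξ : Hsp n) (η : Hsp n) := by
          rw [hηc, hinn0_sub]
        rw [h1, e1, e2]
        have h2 : (∫ t, ⟪g k t, ww t⟫ ∂μ01)
            = (∫ t, ⟪Lvv t (pathH (σ k) t) ((σ k).2 t) ((ξ : Hsp n).2 t), ww t⟫ ∂μ01)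
              - ∫ t, ⟪Lvv t (pathH γ t) (γ.2 t) ((ξ : Hsp n).2 t), ww t⟫ ∂μ01 := by
          rw [← integral_sub (hint1 (σ k) (hσU k) ((ξ : Hsp n).2) ww)
            (hint1 γ hγ ((ξ : Hsp n).2) ww)]
          refine integral_congr_ae (Eventually.of_forall fun t => ?_)
          simp only [hg_def, inner_sub_left]
        rw [h2]; ring
      -- coercivity
      have hT1 : ℓ₂ * ‖ww‖ ^ 2 ≤ ∫ t, ⟪Lvv t 0 0 (ww t), ww t⟫ ∂μ01 := by
        have hmono : (∫ t, ℓ₂ * ‖ww t‖ ^ 2 ∂μ01) ≤ ∫ t, ⟪Lvv t 0 0 (ww t), ww t⟫ ∂μ01 := by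
          refine integral_mono_ae ((integrable_normsq ww).const_mul ℓ₂) (hint0 ww ww) ?_
          filter_upwards [ae_restrict_mem measurableSet_Icc] with t ht
          exact hL2 t ht 0 h0U 0 (ww t)
        calc ℓ₂ * ‖ww‖ ^ 2 = ∫ t, ℓ₂ * ‖ww t‖ ^ 2 ∂μ01 := by
              rw [integral_const_mul, integral_normsq_eq]
          _ ≤ _ := hmono
      have hT2nn : 0 ≤ ∫ t, ⟪pathH (η : Hsp n) t, pathH (η : Hsp n) t⟫ ∂μ01 :=
        integral_nonneg fun t => real_inner_self_nonneg
      have hT2eq : (∫ t, ⟪pathH (η : Hsp n) t, pathH (η : Hsp n) t⟫ ∂μ01)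
          = ∫ t, ‖pathH (η : Hsp n) t‖ ^ 2 ∂μ01 :=
        integral_congr_ae (Eventually.of_forall fun t => real_inner_self_eq_norm_sq _)
      -- first coordinate bound
      have hfst : ‖(η : Hsp n).1‖ ^ 2
          ≤ 2 * (∫ t, ‖pathH (η : Hsp n) t‖ ^ 2 ∂μ01) + 2 * ‖ww‖ ^ 2 := by
        have hconst : ‖(η : Hsp n).1‖ ^ 2 = ∫ (_ : ℝ), ‖(η : Hsp n).1‖ ^ 2 ∂μ01 := by
          rw [integral_const]; simp
        have hcont2 : Continuous (fun t => 2 * ‖pathH (η : Hsp n) t‖ ^ 2) :=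
          continuous_const.mul (((pathH_continuous (η : Hsp n)).norm).pow 2)
        have hrhs_int : Integrable (fun t => 2 * ‖pathH (η : Hsp n) t‖ ^ 2 + 2 * ‖ww‖ ^ 2) μ01 :=
          Integrable.add hcont2.integrableOn_Icc (integrable_const _)
        have hmono : (∫ (_ : ℝ), ‖(η : Hsp n).1‖ ^ 2 ∂μ01)
            ≤ ∫ t, (2 * ‖pathH (η : Hsp n) t‖ ^ 2 + 2 * ‖ww‖ ^ 2) ∂μ01 := by
          refine integral_mono_ae (integrable_const _) hrhs_int ?_
          filter_upwards [ae_restrict_mem measurableSet_Icc] with t ht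
          have h1 : ‖(η : Hsp n).1‖ ≤ ‖pathH (η : Hsp n) t‖ + ‖ww‖ := fst_norm_le _ t ht
          have h2 : (0:ℝ) ≤ ‖pathH (η : Hsp n) t‖ := norm_nonneg _
          have h3 : (0:ℝ) ≤ ‖ww‖ := norm_nonneg _
          have h4 : (0:ℝ) ≤ ‖(η : Hsp n).1‖ := norm_nonneg _
          nlinarith [sq_nonneg (‖pathH (η : Hsp n) t‖ - ‖ww‖)]
        have hsplit : (∫ t, (2 * ‖pathH (η : Hsp n) t‖ ^ 2 + 2 * ‖ww‖ ^ 2) ∂μ01)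
            = 2 * (∫ t, ‖pathH (η : Hsp n) t‖ ^ 2 ∂μ01) + 2 * ‖ww‖ ^ 2 := by
          rw [integral_add hcont2.integrableOn_Icc (integrable_const _),
            integral_const_mul, integral_const]
          simp
        calc ‖(η : Hsp n).1‖ ^ 2 = ∫ (_ : ℝ), ‖(η : Hsp n).1‖ ^ 2 ∂μ01 := hconst
          _ ≤ ∫ t, (2 * ‖pathH (η : Hsp n) t‖ ^ 2 + 2 * ‖ww‖ ^ 2) ∂μ01 := hmono
          _ = _ := hsplit
      -- Cauchy-Schwarz bound on the RHS
      have hCS : (∫ t, ⟪g k t, ww t⟫ ∂μ01) ≤ ε k * ‖ww‖ := by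
        have hmem_g : MemLp (fun t => ‖g k t‖) (ENNReal.ofReal 2) μ01 := by
          rw [show ENNReal.ofReal (2:ℝ) = 2 by simp]
          refine MemLp.of_le ((Lp.memLp ((ξ : Hsp n).2)).norm.const_mul (2 * ℓ₁))
            (hgm k).norm ?_
          filter_upwards [hgbd k] with t hbd
          rw [Real.norm_of_nonneg (norm_nonneg _)]
          exact hbd.trans (le_abs_self _)
        have hmem_w : MemLp (fun t => ‖ww t‖) (ENNReal.ofReal 2) μ01 := by
          rw [show ENNReal.ofReal (2:ℝ) = 2 by simp]
          exact (Lp.memLp ww).norm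
        have hconj : Real.HolderConjugate 2 2 := Real.HolderConjugate.two_two
        have hH := integral_mul_le_Lp_mul_Lq_of_nonneg hconj
          (Eventually.of_forall fun t => norm_nonneg (g k t))
          (Eventually.of_forall fun t => norm_nonneg (ww t)) hmem_g hmem_w
        have hpow : ∀ u : ℝ → E n, (∫ t, ‖u t‖ ^ (2:ℝ) ∂μ01) = ∫ t, ‖u t‖ ^ 2 ∂μ01 := by
          intro u
          refine integral_congr_ae (Eventually.of_forall fun t => ?_)
          show ‖u t‖ ^ (2:ℝ) = ‖u t‖ ^ 2
          norm_cast
        rw [hpow, hpow] at hH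
        have hstep1 : (∫ t, ⟪g k t, ww t⟫ ∂μ01) ≤ ∫ t, ‖g k t‖ * ‖ww t‖ ∂μ01 := by
          refine integral_mono_ae ?_ ?_ (Eventually.of_forall fun t => real_inner_le_norm _ _)
          · refine ((hint1 (σ k) (hσU k) ((ξ : Hsp n).2) ww).sub
              (hint1 γ hγ ((ξ : Hsp n).2) ww)).congr (Eventually.of_forall fun t => ?_)
            simp only [Pi.sub_apply, hg_def, inner_sub_left]
          · exact integrable_mul_sq (hgm k).norm (Lp.aestronglyMeasurable ww).norm
              (hgsq_int k) (integrable_normsq ww)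
        have hsq : (∫ t, ‖ww t‖ ^ 2 ∂μ01) ^ (1/(2:ℝ)) = ‖ww‖ := by
          rw [integral_normsq_eq, ← Real.sqrt_eq_rpow, Real.sqrt_sq (norm_nonneg _)]
        have hsq2 : (∫ t, ‖g k t‖ ^ 2 ∂μ01) ^ (1/(2:ℝ)) = ε k := by
          rw [← Real.sqrt_eq_rpow, hε_def]
        rw [hsq, hsq2] at hH
        exact hstep1.trans hH
      -- combine everything
      have hwle : ‖ww‖ ≤ ‖(η : Hsp n)‖ := norm_snd_le _
      have hKnn : (0:ℝ) ≤ 2 + 3 / ℓ₂ := by positivity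
      have hfinal : ‖(η : Hsp n)‖ ^ 2 ≤ (2 + 3 / ℓ₂) * (ε k * ‖(η : Hsp n)‖) := by
        set T1 : ℝ := ∫ t, ⟪Lvv t 0 0 (ww t), ww t⟫ ∂μ01 with hT1_def
        set T2 : ℝ := ∫ t, ⟪pathH (η : Hsp n) t, pathH (η : Hsp n) t⟫ ∂μ01 with hT2_def
        have hT1nn : 0 ≤ T1 := le_trans (by positivity) hT1
        have hsum : T1 + T2 ≤ ε k * ‖(η : Hsp n)‖ := by
          have : T1 + T2 = inn0 Lvv (η : Hsp n) (η : Hsp n) := by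
            rw [inn0]
          rw [this, hsub]
          refine hCS.trans ?_
          have hεnn : 0 ≤ ε k := Real.sqrt_nonneg _
          exact mul_le_mul_of_nonneg_left hwle hεnn
        have hnsq : ‖(η : Hsp n)‖ ^ 2 ≤ ‖(η : Hsp n).1‖ ^ 2 + ‖ww‖ ^ 2 := by
          rw [Prod.norm_def]
          rcases max_cases ‖(η : Hsp n).1‖ ‖(η : Hsp n).2‖ with ⟨h1, _⟩ | ⟨h1, _⟩ <;>
            rw [h1] <;> nlinarith [norm_nonneg (η : Hsp n).1, norm_nonneg (η : Hsp n).2]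
        have hww3 : 3 * ‖ww‖ ^ 2 ≤ (3 / ℓ₂) * T1 := by
          have := hT1
          rw [div_mul_eq_mul_div, le_div_iff₀ hℓ₂]
          nlinarith
        have hT2' : (∫ t, ‖pathH (η : Hsp n) t‖ ^ 2 ∂μ01) = T2 := hT2eq.symm
        calc ‖(η : Hsp n)‖ ^ 2 ≤ ‖(η : Hsp n).1‖ ^ 2 + ‖ww‖ ^ 2 := hnsq
          _ ≤ (2 * (∫ t, ‖pathH (η : Hsp n) t‖ ^ 2 ∂μ01) + 2 * ‖ww‖ ^ 2) + ‖ww‖ ^ 2 := by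
              linarith [hfst]
          _ = 2 * T2 + 3 * ‖ww‖ ^ 2 := by rw [hT2']; ring
          _ ≤ 2 * T2 + (3 / ℓ₂) * T1 := by linarith [hww3]
          _ ≤ (2 + 3 / ℓ₂) * (T1 + T2) := by nlinarith [hT2nn, hT1nn, div_nonneg (by norm_num : (0:ℝ) ≤ 3) hℓ₂.le]
          _ ≤ (2 + 3 / ℓ₂) * (ε k * ‖(η : Hsp n)‖) := by
              exact mul_le_mul_of_nonneg_left hsum hKnn
      have := sq_le_aux (norm_nonneg (η : Hsp n))
        (by positivity : (0:ℝ) ≤ (2 + 3 / ℓ₂) * ε k)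
        (by calc ‖(η : Hsp n)‖ ^ 2 ≤ (2 + 3 / ℓ₂) * (ε k * ‖(η : Hsp n)‖) := hfinal
              _ = ((2 + 3 / ℓ₂) * ε k) * ‖(η : Hsp n)‖ := by ring)
      calc ‖(A (σ k) ξ : Hsp n) - (A γ ξ : Hsp n)‖ = ‖(η : Hsp n)‖ := by rw [hηc]
        _ ≤ (2 + 3 / ℓ₂) * ε k := this
    -- conclude
    have hcoe : Tendsto (fun k => (A (σ k) ξ : Hsp n)) atTop (𝓝 (A γ ξ : Hsp n)) := by
      rw [tendsto_iff_norm_sub_tendsto_zero]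
      refine squeeze_zero (fun k => norm_nonneg _) hest ?_
      simpa using hεto.const_mul (2 + 3 / ℓ₂)
    exact tendsto_subtype_rng.mpr hcoe
  -- subsequence argument
  refine tendsto_of_subseq_tendsto fun ns hns => ?_
  have hLp : Tendsto (fun k => (γs (ns k)).2) atTop (𝓝 γ.2) :=
    (continuous_snd.tendsto γ).comp (hconv.comp hns)
  have hmeas : TendstoInMeasure μ01 (fun k => ((γs (ns k)).2 : ℝ → E n)) atTop (γ.2 : ℝ → E n) :=
    tendstoInMeasure_of_tendsto_Lp hLp
  obtain ⟨ms, hms_mono, hms_ae⟩ := hmeas.exists_seq_tendsto_ae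
  refine ⟨ms, key (fun k => γs (ns (ms k))) (fun k => hγs _) ?_ hms_ae⟩
  exact hconv.comp (hns.comp hms_mono.tendsto_atTop)
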